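/- arXiv:1712.10145 — 2 statements merged into one kernel-verified Lean document; each statement's English description precedes it below -/
import Mathlib

section
/- Under the assumptions a₁ > a₃ > 0 and a₂ > a₄, the discriminant of the quadratic h(x) = Ax² + Bx + C with A = (a₁a₄² − a₂²a₃) + a₁a₃(a₄ − a₂), B = 2(a₁a₄ − a₂a₃), C = a₁ − a₃ satisfies B² − 4AC = 4a₁a₃(a₂ − a₄)(a₁ + a₂ − a₃ − a₄) > 0. -/
/-- With a₁ > a₃ > 0 and a₂ > a₄, the discriminant of
h(x) = Ax² + Bx + C, A = (a₁a₄² − a₂²a₃) + a₁a₃(a₄ − a₂), B = 2(a₁a₄ − a₂a₃),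
C = a₁ − a₃, satisfies B² − 4AC = 4a₁a₃(a₂ − a₄)(a₁ + a₂ − a₃ − a₄) > 0. -/
theorem stmt_4 (a₁ a₂ a₃ a₄ A B C : ℝ) (h₁ : a₁ > a₃) (h₃ : a₃ > 0) (h₂ : a₂ > a₄)
    (hA : A = (a₁ * a₄ ^ 2 - a₂ ^ 2 * a₃) + a₁ * a₃ * (a₄ - a₂))
    (hB : B = 2 * (a₁ * a₄ - a₂ * a₃)) (hC : C = a₁ - a₃) :
    B ^ 2 - 4 * A * C = 4 * a₁ * a₃ * (a₂ - a₄) * (a₁ + a₂ - a₃ - a₄) ∧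
      B ^ 2 - 4 * A * C > 0 := by
  have heq : B ^ 2 - 4 * A * C = 4 * a₁ * a₃ * (a₂ - a₄) * (a₁ + a₂ - a₃ - a₄) := by
    subst hA hB hC; ring
  refine ⟨heq, heq ▸ ?_⟩
  have : 0 < a₁ := lt_trans h₃ h₁
  have h4 : 0 < a₂ - a₄ := by linarith
  have h5 : 0 < a₁ + a₂ - a₃ - a₄ := by linarith
  nlinarith [mul_pos (mul_pos (mul_pos this h₃) h4) h5]
end

section
/- The function f(x) = log₂((a₁g(x) + c·a₂)/(a₂g(x) + c·a₁)) with g(x) = √(Ps·x + N₀), c = √N₀, and constants a₁ > a₂ > 0, Ps > 0, N₀ > 0, is strictly monotonically increasing in x on [0, ∞). -/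
/-- f(x) = log₂((a₁g(x) + c·a₂)/(a₂g(x) + c·a₁)) with
g(x) = √(Ps·x + N₀), c = √N₀, a₁ > a₂ > 0, Ps > 0, N₀ > 0, is strictly
increasing on [0, ∞). -/
theorem stmt_9 (Ps N₀ a₁ a₂ c : ℝ) (hPs : 0 < Ps) (hN₀ : 0 < N₀)
    (h₁₂ : a₁ > a₂) (h₂ : a₂ > 0) (hc : c = Real.sqrt N₀)
    (g f : ℝ → ℝ) (hg : ∀ x, g x = Real.sqrt (Ps * x + N₀))
    (hf : ∀ x, f x = Real.logb 2 ((a₁ * g x + c * a₂) / (a₂ * g x + c * a₁))) :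
    StrictMonoOn f (Set.Ici 0) := by
  have hcpos : 0 < c := hc ▸ Real.sqrt_pos.mpr hN₀
  have h₁ : 0 < a₁ := lt_trans h₂ h₁₂
  intro x hx y hy hxy
  have hgx : 0 < g x := by
    rw [hg]; exact Real.sqrt_pos.mpr (by nlinarith [Set.mem_Ici.mp hx])
  have hgy : 0 < g y := by
    rw [hg]; exact Real.sqrt_pos.mpr (by nlinarith [Set.mem_Ici.mp hy])
  have hglt : g x < g y := by
    rw [hg, hg]
    exact Real.sqrt_lt_sqrt (by nlinarith [Set.mem_Ici.mp hx]) (by nlinarith)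
  rw [hf, hf]
  apply Real.logb_lt_logb one_lt_two
  · positivity
  · rw [div_lt_div_iff₀ (by positivity) (by positivity)]
    nlinarith [mul_pos hcpos (mul_pos (mul_pos (sub_pos.mpr h₁₂) (by linarith : (0:ℝ) < a₁ + a₂)) (sub_pos.mpr hglt))]
end
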